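/- Let F : ℝ → ℝ be of class C¹ with F' < 0 everywhere, F(0) = 0, F(p) → +∞ as p → −∞ and F(p) → −∞ as p → +∞, and let G : ℝ → ℝ be admissible for F. Then there exists a C¹ function E : ℝ → ℝ solving the ODE E'(t) = 1/G(−2F(E(t))) with E(0) = 0, and any such solution satisfies E'(t) > 0 for all t, E(t) → −∞ as t → −∞, E(t) → +∞ as t → +∞, and E'(t) → 0 as t → ±∞. -/

import Mathlib

open Set Filter Topology

/-- `F⁻¹`, the inverse of the decreasing bijection `F`. -/
noncomputable def Finv (F : ℝ → ℝ) : ℝ → ℝ := Function.invFun F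

/-- `G` is admissible for `F`: it is continuous, even, dominates
`max((−F⁻¹)', (−2F)⁻¹) > 0`, non-increasing on `(-∞,0]` and non-decreasing on `[0,∞)`. -/
def Admissible (F G : ℝ → ℝ) : Prop :=
  Continuous G ∧
  (∀ x : ℝ, 0 < max (deriv (fun y => -(Finv F y)) x)
      (Function.invFun (fun p => -2 * F p) x)) ∧
  (∀ x : ℝ, max (deriv (fun y => -(Finv F y)) x)
      (Function.invFun (fun p => -2 * F p) x) ≤ G x) ∧
  (∀ t : ℝ, G (-t) = G t) ∧
  AntitoneOn G (Iic 0) ∧ MonotoneOn G (Ici 0)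

/-- `ψ(t,x) = −F⁻¹(x E'(t) − F(E(t))) − E(t)`. -/
noncomputable def psi (F E : ℝ → ℝ) (t x : ℝ) : ℝ :=
  -(Finv F (x * deriv E t - F (E t))) - E t

/-- `ψ₁(x) = sup_t ψ(t,x)` (in the extended reals). -/
noncomputable def psi1 (F E : ℝ → ℝ) (x : ℝ) : EReal :=
  ⨆ t : ℝ, (psi F E t x : EReal)

/-- `ψ₂(x) = inf_t ψ(t,x)` (in the extended reals). -/
noncomputable def psi2 (F E : ℝ → ℝ) (x : ℝ) : EReal :=
  ⨅ t : ℝ, (psi F E t x : EReal)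

theorem stmt11 (F G : ℝ → ℝ) (hF : ContDiff ℝ 1 F) (hF' : ∀ p, deriv F p < 0)
    (hF0 : F 0 = 0) (hFbot : Tendsto F atBot atTop) (hFtop : Tendsto F atTop atBot)
    (hG : Admissible F G) :
    (∃ E : ℝ → ℝ, ContDiff ℝ 1 E ∧ E 0 = 0 ∧
      ∀ t : ℝ, deriv E t = 1 / G (-2 * F (E t))) ∧
    (∀ E : ℝ → ℝ, ContDiff ℝ 1 E → E 0 = 0 →
      (∀ t : ℝ, deriv E t = 1 / G (-2 * F (E t))) →
      (∀ t : ℝ, 0 < deriv E t) ∧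
      Tendsto E atBot atBot ∧ Tendsto E atTop atTop ∧
      Tendsto (deriv E) atBot (𝓝 0) ∧ Tendsto (deriv E) atTop (𝓝 0)) := by
  obtain ⟨hGc, hGposmax, hGge, hGeven, hGanti, hGmono⟩ := hG
  have hFc : Continuous F := hF.continuous
  have hFanti : StrictAnti F := strictAnti_of_deriv_neg hF'
  have hGpos : ∀ x, 0 < G x := fun x => lt_of_lt_of_le (hGposmax x) (hGge x)
  -- the integrand g
  set g : ℝ → ℝ := fun s => G (-2 * F s) with hgdef
  have hgc : Continuous g := hGc.comp (by continuity)
  have hgpos : ∀ s, 0 < g s := fun s => hGpos _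
  have hG0le : ∀ x : ℝ, G 0 ≤ G x := by
    intro x
    rcases le_total x 0 with hx | hx
    · exact hGanti hx (le_refl (0:ℝ) : (0:ℝ) ∈ Iic 0) hx
    · exact hGmono (le_refl (0:ℝ) : (0:ℝ) ∈ Ici 0) hx hx
  have hgG0 : ∀ s, G 0 ≤ g s := fun s => hG0le _
  -- H(x) = ∫₀ˣ g
  set H : ℝ → ℝ := fun x => ∫ s in (0:ℝ)..x, g s with hHdef
  have hHd : ∀ x, HasDerivAt H (g x) x := fun x =>
    intervalIntegral.integral_hasDerivAt_right (hgc.intervalIntegrable _ _)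
      hgc.aestronglyMeasurable.stronglyMeasurableAtFilter hgc.continuousAt
  have hHdiff : Differentiable ℝ H := fun x => (hHd x).differentiableAt
  have hHcont : Continuous H := hHdiff.continuous
  have hHmono : StrictMono H := strictMono_of_deriv_pos fun x => by
    rw [(hHd x).deriv]; exact hgpos x
  have hH0 : H 0 = 0 := intervalIntegral.integral_same
  -- growth of H
  have hHge : ∀ x : ℝ, 0 ≤ x → G 0 * x ≤ H x := by
    intro x hx
    have h1 : (∫ s in (0:ℝ)..x, G 0) ≤ ∫ s in (0:ℝ)..x, g s :=
      intervalIntegral.integral_mono_on hx (intervalIntegrable_const)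
        (hgc.intervalIntegrable _ _) fun s _ => hgG0 s
    simpa [intervalIntegral.integral_const, smul_eq_mul, mul_comm] using h1
  have hHle : ∀ x : ℝ, x ≤ 0 → H x ≤ G 0 * x := by
    intro x hx
    have h1 : (∫ s in x..(0:ℝ), G 0) ≤ ∫ s in x..(0:ℝ), g s :=
      intervalIntegral.integral_mono_on hx (intervalIntegrable_const)
        (hgc.intervalIntegrable _ _) fun s _ => hgG0 s
    have h2 : H x = -∫ s in x..(0:ℝ), g s := intervalIntegral.integral_symm x 0
    rw [h2]
    simp only [intervalIntegral.integral_const, smul_eq_mul] at h1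
    nlinarith
  have hHtop : Tendsto H atTop atTop := by
    apply tendsto_atTop_mono' atTop ?_ (Tendsto.const_mul_atTop (hGpos 0) tendsto_id)
    filter_upwards [eventually_ge_atTop (0:ℝ)] with x hx
    exact hHge x hx
  have hHbot : Tendsto H atBot atBot := by
    apply tendsto_atBot_mono' atBot ?_
      (Tendsto.const_mul_atBot (hGpos 0) tendsto_id)
    filter_upwards [eventually_le_atBot (0:ℝ)] with x hx
    exact hHle x hx
  have hHsurj : Function.Surjective H := hHcont.surjective hHtop hHbot
  -- E₀ = H⁻¹
  let e : ℝ ≃o ℝ := StrictMono.orderIsoOfSurjective H hHmono hHsurj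
  have heH : ∀ x, e x = H x := fun x => rfl
  set E₀ : ℝ → ℝ := fun t => e.symm t with hE₀def
  have hHE₀ : ∀ t, H (E₀ t) = t := fun t => e.apply_symm_apply t
  have hE₀H : ∀ x, E₀ (H x) = x := fun x => e.symm_apply_apply x
  have hE₀cont : Continuous E₀ := e.symm.continuous
  have hE₀d : ∀ t, HasDerivAt E₀ (g (E₀ t))⁻¹ t := fun t =>
    HasDerivAt.of_local_left_inverse hE₀cont.continuousAt (hHd (E₀ t))
      (ne_of_gt (hgpos _)) (Eventually.of_forall hHE₀)
  have hE₀deriv : ∀ t, deriv E₀ t = 1 / G (-2 * F (E₀ t)) := fun t => by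
    rw [(hE₀d t).deriv, one_div]
  have hE₀cd : ContDiff ℝ 1 E₀ := by
    rw [contDiff_one_iff_deriv]
    refine ⟨fun t => (hE₀d t).differentiableAt, ?_⟩
    have : (deriv E₀) = fun t => (g (E₀ t))⁻¹ := funext fun t => (hE₀d t).deriv
    rw [this]
    exact (hgc.comp hE₀cont).inv₀ fun t => ne_of_gt (hgpos _)
  have hE₀0 : E₀ 0 = 0 := by have := hE₀H 0; rwa [hH0] at this
  refine ⟨⟨E₀, hE₀cd, hE₀0, hE₀deriv⟩, ?_⟩
  -- Part 2
  intro E hE1 hE0 hEode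
  have hEdiff : Differentiable ℝ E := hE1.differentiable one_ne_zero
  have hEpos : ∀ t, 0 < deriv E t := fun t => by
    rw [hEode t]; exact one_div_pos.mpr (hGpos _)
  -- H ∘ E = id
  have hkey : ∀ t, H (E t) = t := by
    have hφd : ∀ t, HasDerivAt (fun t => H (E t) - t) 0 t := by
      intro t
      have h1 : HasDerivAt (fun t => H (E t)) (g (E t) * deriv E t) t :=
        (hHd (E t)).comp t (hEdiff t).hasDerivAt
      have h2 : g (E t) * deriv E t = 1 := by
        rw [hEode t]
        rw [mul_one_div, div_self (ne_of_gt (hgpos (E t)))]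
      rw [h2] at h1
      simpa [Pi.sub_def] using h1.sub (hasDerivAt_id' t)
    have hconst : ∀ t : ℝ, H (E t) - t = H (E 0) - 0 :=
      fun t => is_const_of_deriv_eq_zero (fun x => (hφd x).differentiableAt)
        (fun x => (hφd x).deriv) t 0
    intro t
    have := hconst t
    rw [hE0, hH0] at this
    linarith
  have hEtop : Tendsto E atTop atTop := by
    rw [tendsto_atTop_atTop]
    intro b
    refine ⟨H b, fun t ht => ?_⟩
    have : H b ≤ H (E t) := by rw [hkey t]; exact ht
    exact hHmono.le_iff_le.mp this
  have hEbot : Tendsto E atBot atBot := by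
    rw [tendsto_atBot_atBot]
    intro b
    refine ⟨H b, fun t ht => ?_⟩
    have : H (E t) ≤ H b := by rw [hkey t]; exact ht
    exact hHmono.le_iff_le.mp this
  -- inverse of p ↦ -2F(p) tends to atTop
  set φ : ℝ → ℝ := fun p => -2 * F p with hφdef
  have hφmono : StrictMono φ := by
    intro a b hab
    have := hFanti hab
    simp only [hφdef]
    nlinarith
  have hφsurj : Function.Surjective φ := by
    intro y
    obtain ⟨p, hp⟩ := hFc.surjective' hFbot hFtop (-y / 2)
    exact ⟨p, by simp only [hφdef, hp]; ring⟩
  have hinvtop : Tendsto (Function.invFun φ) atTop atTop := by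
    rw [tendsto_atTop_atTop]
    intro M
    refine ⟨φ M, fun x hx => ?_⟩
    have hright : φ (Function.invFun φ x) = x := Function.rightInverse_invFun hφsurj x
    exact hφmono.le_iff_le.mp (by rw [hright]; exact hx)
  have hGtop : Tendsto G atTop atTop :=
    tendsto_atTop_mono (fun x => le_trans (le_max_right _ _) (hGge x)) hinvtop
  -- deriv E → 0 at +∞
  have hFE_top : Tendsto (fun t => -2 * F (E t)) atTop atTop :=
    (tendsto_const_mul_atTop_of_neg (by norm_num : (-2:ℝ) < 0)).mpr (hFtop.comp hEtop)
  have hden_top : Tendsto (fun t => G (-2 * F (E t))) atTop atTop := hGtop.comp hFE_top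
  have hdtop : Tendsto (deriv E) atTop (𝓝 0) := by
    have : Tendsto (fun t => 1 / G (-2 * F (E t))) atTop (𝓝 0) := by
      simp only [one_div]
      exact hden_top.inv_tendsto_atTop
    exact this.congr fun t => (hEode t).symm
  -- deriv E → 0 at -∞
  have hFE_bot : Tendsto (fun t => 2 * F (E t)) atBot atTop :=
    (tendsto_const_mul_atTop_of_pos (by norm_num : (0:ℝ) < 2)).mpr (hFbot.comp hEbot)
  have hden_bot : Tendsto (fun t => G (-2 * F (E t))) atBot atTop := by
    have h1 : Tendsto (fun t => G (2 * F (E t))) atBot atTop := hGtop.comp hFE_bot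
    refine h1.congr fun t => ?_
    rw [show (-2 : ℝ) * F (E t) = -(2 * F (E t)) by ring, hGeven]
  have hdbot : Tendsto (deriv E) atBot (𝓝 0) := by
    have : Tendsto (fun t => 1 / G (-2 * F (E t))) atBot (𝓝 0) := by
      simp only [one_div]
      exact hden_bot.inv_tendsto_atTop
    exact this.congr fun t => (hEode t).symm
  exact ⟨hEpos, hEbot, hEtop, hdbot, hdtop⟩
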